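/- The one-sided limits of H̃ at the critical value q = 3√3/2 agree: lim_{q → (3√3/2)⁻} H̃(q) = (2 − √3)·exp(√3/2) and lim_{q → (3√3/2)⁺} H̃(q) = (2 − √3)·exp(√3/2); in particular H̃ extends continuously across q = 3√3/2. -/

import Mathlib

open Filter Set

/-- `w` is the root of `q (z^3 - z) + 1 = 0` with `Im w ≥ 0`, `Re w > 0` having the
smallest real part among all such roots. -/
def IsQtilde (q : ℝ) (w : ℂ) : Prop :=
  (q : ℂ) * (w ^ 3 - w) + 1 = 0 ∧ 0 ≤ w.im ∧ 0 < w.re ∧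
    ∀ z : ℂ, (q : ℂ) * (z ^ 3 - z) + 1 = 0 → 0 ≤ z.im → 0 < z.re → w.re ≤ z.re

/-- `H̃(q) = |(q̃ - 1)/(q̃ + 1)| · exp(q · Re(q̃²))` where `q̃` is the distinguished root. -/
noncomputable def Htilde (q : ℝ) : ℝ :=
  ‖(Classical.epsilon (IsQtilde q) - 1) / (Classical.epsilon (IsQtilde q) + 1)‖ *
    Real.exp (q * ((Classical.epsilon (IsQtilde q)) ^ 2).re)

noncomputable def tq (q : ℝ) : ℝ := 3 * Real.sqrt 3 / (2 * q)

noncomputable def sR (q : ℝ) : ℝ := Real.arccos (tq q) / 3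

noncomputable def psiL (q : ℝ) : ℝ := Real.log (tq q + Real.sqrt ((tq q) ^ 2 - 1)) / 3

noncomputable def wR (q : ℝ) : ℝ := Real.cos (sR q) / Real.sqrt 3 - Real.sin (sR q)

noncomputable def wL (q : ℝ) : ℂ :=
  (Real.cosh (psiL q) / Real.sqrt 3 : ℝ) + (Real.sinh (psiL q) : ℝ) * Complex.I

lemma sqrt3_pos : (0:ℝ) < Real.sqrt 3 := Real.sqrt_pos.mpr (by norm_num)
lemma sqrt3_sq : Real.sqrt 3 ^ 2 = 3 := Real.sq_sqrt (by norm_num)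
lemma sqrt3_lt_two : Real.sqrt 3 < 2 := by nlinarith [sqrt3_sq, sqrt3_pos]
lemma one_lt_sqrt3 : (1:ℝ) < Real.sqrt 3 := by nlinarith [sqrt3_sq, sqrt3_pos]

lemma cubic_roots {q : ℝ} (hq : q ≠ 0) {z z1 z2 z3 : ℂ}
    (he1 : z1 + z2 + z3 = 0) (he2 : z1 * z2 + z1 * z3 + z2 * z3 = -1)
    (he3 : (q : ℂ) * (z1 * z2 * z3) = -1)
    (hz : (q : ℂ) * (z ^ 3 - z) + 1 = 0) : z = z1 ∨ z = z2 ∨ z = z3 := by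
  have hq' : (q : ℂ) ≠ 0 := Complex.ofReal_ne_zero.mpr hq
  have h : (q : ℂ) * ((z - z1) * (z - z2) * (z - z3)) = 0 := by
    linear_combination hz - ((q:ℂ) * z ^ 2) * he1 + ((q:ℂ) * z) * he2 - he3
  have h2 : (z - z1) * (z - z2) * (z - z3) = 0 := by
    rcases mul_eq_zero.mp h with h | h
    · exact absurd h hq'
    · exact h
  rcases mul_eq_zero.mp h2 with h3 | h3
  · rcases mul_eq_zero.mp h3 with h4 | h4
    · exact Or.inl (sub_eq_zero.mp h4)
    · exact Or.inr (Or.inl (sub_eq_zero.mp h4))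
  · exact Or.inr (Or.inr (sub_eq_zero.mp h3))

lemma root_of_e {q : ℝ} {z1 z2 z3 : ℂ}
    (he1 : z1 + z2 + z3 = 0) (he2 : z1 * z2 + z1 * z3 + z2 * z3 = -1)
    (he3 : (q : ℂ) * (z1 * z2 * z3) = -1) :
    (q : ℂ) * (z1 ^ 3 - z1) + 1 = 0 := by
  linear_combination ((q:ℂ) * z1 ^ 2) * he1 - ((q:ℂ) * z1) * he2 + he3

lemma epsilon_IsQtilde_eq {q : ℝ} {w : ℂ} (hw : IsQtilde q w)
    (huniq : ∀ w', IsQtilde q w' → w' = w) : Classical.epsilon (IsQtilde q) = w :=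
  huniq _ (Classical.epsilon_spec ⟨w, hw⟩)

noncomputable def crit : ℝ := 3 * Real.sqrt 3 / 2

lemma crit_pos : 0 < crit := by
  have := sqrt3_pos; unfold crit; linarith

/-! ### Right side: q > crit -/

lemma tq_mem {q : ℝ} (hq : crit < q) : 0 < tq q ∧ tq q < 1 := by
  have hq0 : 0 < q := lt_trans crit_pos hq
  have ht : tq q = 3 * Real.sqrt 3 / (2 * q) := rfl
  constructor
  · rw [ht]; exact div_pos (by positivity) (by linarith)
  · rw [ht, div_lt_one (by linarith)]
    unfold crit at hq; linarith

lemma sR_mem {q : ℝ} (hq : crit < q) : 0 < sR q ∧ sR q < Real.pi / 6 := by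
  obtain ⟨h0, h1⟩ := tq_mem hq
  constructor
  · exact div_pos (Real.arccos_pos.mpr h1) (by norm_num)
  · have := Real.arccos_lt_pi_div_two.mpr h0
    unfold sR; linarith

lemma cos_three_sR {q : ℝ} (hq : crit < q) : Real.cos (3 * sR q) = tq q := by
  obtain ⟨h0, h1⟩ := tq_mem hq
  have : 3 * sR q = Real.arccos (tq q) := by unfold sR; ring
  rw [this, Real.cos_arccos (by linarith) (by linarith)]

noncomputable def r2 (q : ℝ) : ℝ := Real.cos (sR q) / Real.sqrt 3 + Real.sin (sR q)
noncomputable def r3 (q : ℝ) : ℝ := -2 * Real.cos (sR q) / Real.sqrt 3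

lemma right_e1 (q : ℝ) : wR q + r2 q + r3 q = 0 := by
  unfold wR r2 r3; field_simp; ring

lemma right_e2 (q : ℝ) : wR q * r2 q + wR q * r3 q + r2 q * r3 q = -1 := by
  have hCS := Real.sin_sq_add_cos_sq (sR q)
  have h3 := sqrt3_sq
  have hne := sqrt3_pos.ne'
  unfold wR r2 r3
  field_simp
  nlinarith [hCS, h3]

lemma right_e3 {q : ℝ} (hq : crit < q) : q * (wR q * r2 q * r3 q) = -1 := by
  have hq0 : 0 < q := lt_trans crit_pos hq
  have hCS := Real.sin_sq_add_cos_sq (sR q)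
  have h3 := sqrt3_sq
  have hne := sqrt3_pos.ne'
  have hc3 : 4 * Real.cos (sR q) ^ 3 - 3 * Real.cos (sR q) = tq q := by
    rw [← Real.cos_three_mul]; exact cos_three_sR hq
  have ht : tq q * (2 * q) = 3 * Real.sqrt 3 := by
    unfold tq; field_simp
  unfold wR r2 r3
  field_simp
  linear_combination (-2*q*Real.cos (sR q)*Real.sin (sR q)^2) * h3 +
    (-6*q*Real.cos (sR q)) * hCS + (2*q) * hc3 + ht +
    (4*q*Real.cos (sR q)*Real.sin (sR q)^2 + Real.sqrt 3) * h3 + (12*q*Real.cos (sR q)) * hCS +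
    (-4*q) * hc3 + (-2) * ht

lemma cos_sR_gt {q : ℝ} (hq : crit < q) : Real.sqrt 3 / 2 < Real.cos (sR q) := by
  obtain ⟨hs0, hs1⟩ := sR_mem hq
  calc Real.sqrt 3 / 2 = Real.cos (Real.pi / 6) := Real.cos_pi_div_six.symm
    _ < Real.cos (sR q) :=
      Real.cos_lt_cos_of_nonneg_of_le_pi (le_of_lt hs0)
        (by linarith [Real.pi_gt_three]) hs1

lemma sin_sR_lt {q : ℝ} (hq : crit < q) : Real.sin (sR q) < 1 / 2 := by
  obtain ⟨hs0, hs1⟩ := sR_mem hq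
  calc Real.sin (sR q) < Real.sin (Real.pi / 6) :=
        Real.sin_lt_sin_of_lt_of_le_pi_div_two (by linarith [Real.pi_pos])
          (by linarith [Real.pi_pos]) hs1
    _ = 1 / 2 := Real.sin_pi_div_six

lemma wR_pos {q : ℝ} (hq : crit < q) : 0 < wR q := by
  have hC := cos_sR_gt hq
  have hS := sin_sR_lt hq
  have h1 : (1:ℝ)/2 < Real.cos (sR q) / Real.sqrt 3 := by
    rw [lt_div_iff₀ sqrt3_pos]
    nlinarith [sqrt3_sq, sqrt3_pos]
  unfold wR; linarith

lemma wR_lt_r2 {q : ℝ} (hq : crit < q) : wR q < r2 q := by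
  obtain ⟨hs0, hs1⟩ := sR_mem hq
  have : 0 < Real.sin (sR q) :=
    Real.sin_pos_of_pos_of_lt_pi hs0 (by linarith [Real.pi_gt_three])
  unfold wR r2; linarith

lemma r3_neg {q : ℝ} (hq : crit < q) : r3 q < 0 := by
  have hC := cos_sR_gt hq
  have h := sqrt3_pos
  unfold r3
  apply div_neg_of_neg_of_pos _ sqrt3_pos
  nlinarith

lemma isQtilde_right {q : ℝ} (hq : crit < q) : IsQtilde q ((wR q : ℝ) : ℂ) := by
  have hq0 : 0 < q := lt_trans crit_pos hq
  have he1 : ((wR q : ℂ)) + (r2 q : ℂ) + (r3 q : ℂ) = 0 := by exact_mod_cast right_e1 q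
  have he2 : (wR q : ℂ) * (r2 q : ℂ) + (wR q : ℂ) * (r3 q : ℂ) + (r2 q : ℂ) * (r3 q : ℂ) = -1 := by
    exact_mod_cast right_e2 q
  have he3 : (q : ℂ) * ((wR q : ℂ) * (r2 q : ℂ) * (r3 q : ℂ)) = -1 := by
    exact_mod_cast right_e3 hq
  refine ⟨root_of_e he1 he2 he3, by simp, by simpa using wR_pos hq, ?_⟩
  intro z hz him hre
  rcases cubic_roots hq0.ne' he1 he2 he3 hz with h | h | h <;> subst h
  · simp
  · simp only [Complex.ofReal_re]
    exact le_of_lt (wR_lt_r2 hq)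
  · simp only [Complex.ofReal_re] at hre
    linarith [r3_neg hq]

lemma epsilon_right {q : ℝ} (hq : crit < q) :
    Classical.epsilon (IsQtilde q) = ((wR q : ℝ) : ℂ) := by
  have hq0 : 0 < q := lt_trans crit_pos hq
  have he1 : ((wR q : ℂ)) + (r2 q : ℂ) + (r3 q : ℂ) = 0 := by exact_mod_cast right_e1 q
  have he2 : (wR q : ℂ) * (r2 q : ℂ) + (wR q : ℂ) * (r3 q : ℂ) + (r2 q : ℂ) * (r3 q : ℂ) = -1 := by
    exact_mod_cast right_e2 q
  have he3 : (q : ℂ) * ((wR q : ℂ) * (r2 q : ℂ) * (r3 q : ℂ)) = -1 := by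
    exact_mod_cast right_e3 hq
  refine epsilon_IsQtilde_eq (isQtilde_right hq) ?_
  rintro w' ⟨hw1, hw2, hw3, hw4⟩
  rcases cubic_roots hq0.ne' he1 he2 he3 hw1 with h | h | h <;> subst h
  · rfl
  · exfalso
    have := hw4 ((wR q : ℝ) : ℂ) (root_of_e he1 he2 he3) (by simp) (by simpa using wR_pos hq)
    simp only [Complex.ofReal_re] at this
    linarith [wR_lt_r2 hq]
  · exfalso
    simp only [Complex.ofReal_re] at hw3
    linarith [r3_neg hq]

/-! ### Left side: 0 < q < crit -/

lemma tq_gt_one {q : ℝ} (hq0 : 0 < q) (hq : q < crit) : 1 < tq q := by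
  have ht : tq q = 3 * Real.sqrt 3 / (2 * q) := rfl
  rw [ht, lt_div_iff₀ (by linarith)]
  unfold crit at hq; linarith

lemma A_gt_one {q : ℝ} (hq0 : 0 < q) (hq : q < crit) :
    1 < tq q + Real.sqrt ((tq q) ^ 2 - 1) := by
  have h1 := tq_gt_one hq0 hq
  have := Real.sqrt_nonneg ((tq q) ^ 2 - 1)
  linarith

lemma psiL_pos {q : ℝ} (hq0 : 0 < q) (hq : q < crit) : 0 < psiL q := by
  have := Real.log_pos (A_gt_one hq0 hq)
  unfold psiL; linarith

lemma cosh_three_psiL {q : ℝ} (hq0 : 0 < q) (hq : q < crit) :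
    Real.cosh (3 * psiL q) = tq q := by
  have h1 := tq_gt_one hq0 hq
  have hA := A_gt_one hq0 hq
  have h3 : 3 * psiL q = Real.log (tq q + Real.sqrt ((tq q) ^ 2 - 1)) := by
    unfold psiL; ring
  have hsq : Real.sqrt ((tq q) ^ 2 - 1) ^ 2 = (tq q) ^ 2 - 1 :=
    Real.sq_sqrt (by nlinarith)
  have hmul : (tq q + Real.sqrt ((tq q) ^ 2 - 1)) * (tq q - Real.sqrt ((tq q) ^ 2 - 1)) = 1 := by
    linear_combination -hsq
  have hinv : (tq q + Real.sqrt ((tq q) ^ 2 - 1))⁻¹ = tq q - Real.sqrt ((tq q) ^ 2 - 1) :=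
    inv_eq_of_mul_eq_one_right hmul
  rw [h3, Real.cosh_log (by linarith), hinv]
  ring

-- generic symmetric-function identities for the complex-conjugate root configuration
section Gen

variable (C S : ℝ)

noncomputable def gz1 (C S : ℝ) : ℂ := ((C / Real.sqrt 3 : ℝ) : ℂ) + (S : ℂ) * Complex.I
noncomputable def gz2 (C S : ℝ) : ℂ := ((C / Real.sqrt 3 : ℝ) : ℂ) - (S : ℂ) * Complex.I
noncomputable def gz3 (C : ℝ) : ℂ := ((-2 * C / Real.sqrt 3 : ℝ) : ℂ)

lemma gen_e1 : gz1 C S + gz2 C S + gz3 C = 0 := by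
  have hne : ((Real.sqrt 3 : ℝ) : ℂ) ≠ 0 := by exact_mod_cast sqrt3_pos.ne'
  unfold gz1 gz2 gz3
  push_cast
  field_simp
  ring

lemma gen_e2 (h : C ^ 2 - S ^ 2 = 1) :
    gz1 C S * gz2 C S + gz1 C S * gz3 C + gz2 C S * gz3 C = -1 := by
  have hne : ((Real.sqrt 3 : ℝ) : ℂ) ≠ 0 := by exact_mod_cast sqrt3_pos.ne'
  have h3 : ((Real.sqrt 3 : ℝ) : ℂ) ^ 2 = 3 := by exact_mod_cast sqrt3_sq
  have hcs : (C : ℂ) ^ 2 - (S : ℂ) ^ 2 = 1 := by exact_mod_cast h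
  unfold gz1 gz2 gz3
  push_cast
  field_simp
  linear_combination (3 : ℂ) * hcs + ((S:ℂ)^2*3 + 1) * Complex.I_sq +
    ((S:ℂ)^2 * Complex.I^2 + 1) * h3 + (-2*(S:ℂ)^2*Complex.I^2) * h3 +
    (-6*(S:ℂ)^2 - 1) * Complex.I_sq + (-6:ℂ) * hcs

lemma gen_e3 {q t : ℝ} (h : C ^ 2 - S ^ 2 = 1) (hc3 : 4 * C ^ 3 - 3 * C = t)
    (ht : t * (2 * q) = 3 * Real.sqrt 3) :
    (q : ℂ) * (gz1 C S * gz2 C S * gz3 C) = -1 := by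
  have hne : ((Real.sqrt 3 : ℝ) : ℂ) ≠ 0 := by exact_mod_cast sqrt3_pos.ne'
  have h3 : ((Real.sqrt 3 : ℝ) : ℂ) ^ 2 = 3 := by exact_mod_cast sqrt3_sq
  have hcs : (C : ℂ) ^ 2 - (S : ℂ) ^ 2 = 1 := by exact_mod_cast h
  have hc3' : 4 * (C : ℂ) ^ 3 - 3 * (C : ℂ) = (t : ℂ) := by exact_mod_cast hc3
  have ht' : (t : ℂ) * (2 * (q : ℂ)) = 3 * ((Real.sqrt 3 : ℝ) : ℂ) := by exact_mod_cast ht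
  unfold gz1 gz2 gz3
  push_cast
  field_simp
  linear_combination (-2*(q:ℂ)*(C:ℂ)*(S:ℂ)^2*((Real.sqrt 3:ℝ):ℂ)^2) * Complex.I_sq +
    (2*(q:ℂ)*(C:ℂ)*(S:ℂ)^2 - ((Real.sqrt 3:ℝ):ℂ)) * h3 + (-6*(q:ℂ)*(C:ℂ)) * hcs +
    (2*(q:ℂ)) * hc3' + ht' +
    (4*(q:ℂ)*(C:ℂ)*((Real.sqrt 3:ℝ):ℂ)^2*(S:ℂ)^2) * Complex.I_sq +
    (-4*(q:ℂ)*(C:ℂ)*(S:ℂ)^2 + 2*((Real.sqrt 3:ℝ):ℂ)) * h3 + (12*(q:ℂ)*(C:ℂ)) * hcs +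
    (-4*(q:ℂ)) * hc3' + (-2) * ht'

end Gen

lemma wL_eq_gz1 (q : ℝ) : wL q = gz1 (Real.cosh (psiL q)) (Real.sinh (psiL q)) := rfl

lemma epsilon_left {q : ℝ} (hq0 : 0 < q) (hq : q < crit) :
    Classical.epsilon (IsQtilde q) = wL q := by
  set C := Real.cosh (psiL q) with hCdef
  set S := Real.sinh (psiL q) with hSdef
  have hC : 1 ≤ C := Real.one_le_cosh (psiL q)
  have hS : 0 < S := Real.sinh_pos_iff.mpr (psiL_pos hq0 hq)
  have h : C ^ 2 - S ^ 2 = 1 := Real.cosh_sq_sub_sinh_sq (psiL q)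
  have hc3 : 4 * C ^ 3 - 3 * C = tq q := by
    rw [hCdef, ← Real.cosh_three_mul]; exact cosh_three_psiL hq0 hq
  have ht : tq q * (2 * q) = 3 * Real.sqrt 3 := by unfold tq; field_simp
  have he1 := gen_e1 C S
  have he2 := gen_e2 C S h
  have he3 := gen_e3 C S h hc3 ht
  have hgz1re : (gz1 C S).re = C / Real.sqrt 3 := by simp [gz1]
  have hgz1im : (gz1 C S).im = S := by simp [gz1]
  have hgz2im : (gz2 C S).im = -S := by simp [gz2]
  have hgz3re : (gz3 C).re = -2 * C / Real.sqrt 3 := by simp [gz3]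
  have hrepos : 0 < C / Real.sqrt 3 := div_pos (by linarith) sqrt3_pos
  have hw : IsQtilde q (gz1 C S) := by
    refine ⟨root_of_e he1 he2 he3, by rw [hgz1im]; exact hS.le, by rw [hgz1re]; exact hrepos, ?_⟩
    intro z hz him hre
    rcases cubic_roots hq0.ne' he1 he2 he3 hz with hh | hh | hh <;> subst hh
    · exact le_refl _
    · rw [hgz2im] at him; linarith
    · rw [hgz3re] at hre
      have : -2 * C / Real.sqrt 3 < 0 :=
        div_neg_of_neg_of_pos (by linarith) sqrt3_pos
      linarith
  rw [wL_eq_gz1]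
  refine epsilon_IsQtilde_eq hw ?_
  rintro w' ⟨hw1, hw2, hw3, _⟩
  rcases cubic_roots hq0.ne' he1 he2 he3 hw1 with hh | hh | hh <;> subst hh
  · rfl
  · rw [hgz2im] at hw2; linarith
  · rw [hgz3re] at hw3
    have : -2 * C / Real.sqrt 3 < 0 := div_neg_of_neg_of_pos (by linarith) sqrt3_pos
    linarith

/-! ### Limits -/

lemma tq_crit : tq crit = 1 := by
  have h := sqrt3_pos
  unfold tq crit
  rw [div_eq_one_iff_eq (by positivity)]
  ring

lemma tq_continuousAt : ContinuousAt tq crit := by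
  have h := crit_pos
  have : (2 : ℝ) * crit ≠ 0 := by positivity
  exact ContinuousAt.div continuousAt_const
    (continuousAt_const.mul continuousAt_id) this

lemma sR_continuousAt : ContinuousAt sR crit :=
  (Real.continuous_arccos.continuousAt.comp tq_continuousAt).div_const 3

lemma sR_crit : sR crit = 0 := by
  unfold sR
  rw [tq_crit, Real.arccos_one]
  norm_num

lemma wR_continuousAt : ContinuousAt wR crit :=
  ((Real.continuous_cos.continuousAt.comp sR_continuousAt).div_const _).sub
    (Real.continuous_sin.continuousAt.comp sR_continuousAt)

lemma wR_crit : wR crit = 1 / Real.sqrt 3 := by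
  unfold wR
  rw [sR_crit]
  simp

lemma psiL_continuousAt : ContinuousAt psiL crit := by
  have hinner : ContinuousAt (fun q => tq q + Real.sqrt ((tq q) ^ 2 - 1)) crit :=
    tq_continuousAt.add
      (Real.continuous_sqrt.continuousAt.comp ((tq_continuousAt.pow 2).sub continuousAt_const))
  have hval : tq crit + Real.sqrt ((tq crit) ^ 2 - 1) ≠ 0 := by
    rw [tq_crit]; norm_num
  exact (hinner.log hval).div_const 3

lemma psiL_crit : psiL crit = 0 := by
  unfold psiL
  rw [tq_crit]
  norm_num

lemma wL_continuousAt : ContinuousAt wL crit := by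
  have h1 : ContinuousAt (fun q => ((Real.cosh (psiL q) / Real.sqrt 3 : ℝ) : ℂ)) crit :=
    Complex.continuous_ofReal.continuousAt.comp
      ((Real.continuous_cosh.continuousAt.comp psiL_continuousAt).div_const _)
  have h2 : ContinuousAt (fun q => ((Real.sinh (psiL q) : ℝ) : ℂ) * Complex.I) crit :=
    (Complex.continuous_ofReal.continuousAt.comp
      (Real.continuous_sinh.continuousAt.comp psiL_continuousAt)).mul continuousAt_const
  exact h1.add h2

lemma wL_crit : wL crit = ((1 / Real.sqrt 3 : ℝ) : ℂ) := by
  unfold wL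
  rw [psiL_crit]
  simp

lemma absval : |(1 / Real.sqrt 3 - 1) / (1 / Real.sqrt 3 + 1)| = 2 - Real.sqrt 3 := by
  have h1 := one_lt_sqrt3
  have h2 := sqrt3_pos
  have h3 := sqrt3_sq
  have hlt : 1 / Real.sqrt 3 < 1 := by
    rw [div_lt_one h2]; exact h1
  have hpos : (0:ℝ) < 1 / Real.sqrt 3 + 1 := by positivity
  rw [abs_div, abs_of_neg (by linarith), abs_of_pos hpos]
  rw [div_eq_iff hpos.ne']
  field_simp
  nlinarith [h3]

lemma expval : crit * (1 / Real.sqrt 3) ^ 2 = Real.sqrt 3 / 2 := by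
  have h2 := sqrt3_pos
  have h3 := sqrt3_sq
  unfold crit
  field_simp
  nlinarith [h3]

noncomputable def Gleft : ℝ → ℝ := fun q =>
  ‖(wL q - 1) / (wL q + 1)‖ * Real.exp (q * ((wL q) ^ 2).re)

noncomputable def Gright : ℝ → ℝ := fun q =>
  |(wR q - 1) / (wR q + 1)| * Real.exp (q * (wR q) ^ 2)

/-- The one-sided limits of H̃ at q = 3√3/2 both equal (2 - √3)·exp(√3/2). -/
theorem Htilde_continuous_at_critical :
    Tendsto Htilde (nhdsWithin (3 * Real.sqrt 3 / 2) (Set.Iio (3 * Real.sqrt 3 / 2)))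
      (nhds ((2 - Real.sqrt 3) * Real.exp (Real.sqrt 3 / 2))) ∧
    Tendsto Htilde (nhdsWithin (3 * Real.sqrt 3 / 2) (Set.Ioi (3 * Real.sqrt 3 / 2)))
      (nhds ((2 - Real.sqrt 3) * Real.exp (Real.sqrt 3 / 2))) := by
  have hcrit : (3 * Real.sqrt 3 / 2) = crit := rfl
  rw [hcrit]
  constructor
  · -- left limit: q < crit
    have hne : wL crit + 1 ≠ 0 := by
      rw [wL_crit, show ((1 / Real.sqrt 3 : ℝ) : ℂ) + 1 = ((1 / Real.sqrt 3 + 1 : ℝ) : ℂ) by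
        push_cast; ring]
      exact Complex.ofReal_ne_zero.mpr (by positivity)
    have hcont : ContinuousAt Gleft crit := by
      unfold Gleft
      apply ContinuousAt.mul
      · exact continuous_norm.continuousAt.comp
          ((wL_continuousAt.sub continuousAt_const).div
            (wL_continuousAt.add continuousAt_const) hne)
      · exact Real.continuous_exp.continuousAt.comp
          (continuousAt_id.mul (Complex.continuous_re.continuousAt.comp (wL_continuousAt.pow 2)))
    have hval : Gleft crit = (2 - Real.sqrt 3) * Real.exp (Real.sqrt 3 / 2) := by
      unfold Gleft
      simp only [wL_crit]
      rw [show ((1 / Real.sqrt 3 : ℝ) : ℂ) - 1 = ((1 / Real.sqrt 3 - 1 : ℝ) : ℂ) by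
            push_cast; ring,
          show ((1 / Real.sqrt 3 : ℝ) : ℂ) + 1 = ((1 / Real.sqrt 3 + 1 : ℝ) : ℂ) by
            push_cast; ring,
          ← Complex.ofReal_div, Complex.norm_real, Real.norm_eq_abs,
          show (((1 / Real.sqrt 3 : ℝ) : ℂ)) ^ 2 = (((1 / Real.sqrt 3) ^ 2 : ℝ) : ℂ) by
            push_cast; ring,
          Complex.ofReal_re, absval, expval]
    have heq : ∀ᶠ q in nhdsWithin crit (Iio crit), Gleft q = Htilde q := by
      have h0 : ∀ᶠ q in nhdsWithin crit (Iio crit), 0 < q :=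
        (eventually_gt_nhds crit_pos).filter_mono nhdsWithin_le_nhds
      filter_upwards [self_mem_nhdsWithin, h0] with q hq hq0
      unfold Gleft Htilde
      rw [epsilon_left hq0 hq]
    have h1 : Tendsto Gleft (nhdsWithin crit (Iio crit)) (nhds (Gleft crit)) :=
      hcont.continuousWithinAt
    rw [hval] at h1
    exact Tendsto.congr' heq h1
  · -- right limit: q > crit
    have hne : wR crit + 1 ≠ 0 := by
      rw [wR_crit]; positivity
    have hcont : ContinuousAt Gright crit := by
      unfold Gright
      apply ContinuousAt.mul
      · exact continuous_abs.continuousAt.comp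
          ((wR_continuousAt.sub continuousAt_const).div
            (wR_continuousAt.add continuousAt_const) hne)
      · exact Real.continuous_exp.continuousAt.comp
          (continuousAt_id.mul (wR_continuousAt.pow 2))
    have hval : Gright crit = (2 - Real.sqrt 3) * Real.exp (Real.sqrt 3 / 2) := by
      unfold Gright
      simp only [wR_crit]
      rw [absval, expval]
    have heq : ∀ᶠ q in nhdsWithin crit (Ioi crit), Gright q = Htilde q := by
      filter_upwards [self_mem_nhdsWithin] with q hq
      unfold Gright Htilde
      rw [epsilon_right hq,
        show ((wR q : ℝ) : ℂ) - 1 = ((wR q - 1 : ℝ) : ℂ) by push_cast; ring,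
        show ((wR q : ℝ) : ℂ) + 1 = ((wR q + 1 : ℝ) : ℂ) by push_cast; ring,
        ← Complex.ofReal_div, Complex.norm_real, Real.norm_eq_abs,
        show ((wR q : ℝ) : ℂ) ^ 2 = (((wR q) ^ 2 : ℝ) : ℂ) by push_cast; ring,
        Complex.ofReal_re]
    have h1 : Tendsto Gright (nhdsWithin crit (Ioi crit)) (nhds (Gright crit)) :=
      hcont.continuousWithinAt
    rw [hval] at h1
    exact Tendsto.congr' heq h1
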